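/- Let K ⊂ [0,1]^N be a closed subset and 1 ≤ n ≤ N. For A ⊂ {1,…,N} let π_A : ℝ^N → ℝ^A denote coordinate projection. Then the N-dimensional Lebesgue measure of ⋃_{A : |A| ≥ n} π_A^{-1}(π_A K) (intersected with [0,1]^N) is at most 4^N · ℋ^n_∞(K, ‖·‖_∞). -/

import Mathlib

open Set MeasureTheory ENNReal

/-- The `s`-dimensional Hausdorff content `ℋ^s_∞`: the infimum over countable covers
`K = ⋃ E_k` of `∑_k (diam E_k)^s` (diameters in the `ℓ^∞`-norm on `Fin N → ℝ`). -/
noncomputable def hausdorffContentInf {X : Type*} [PseudoEMetricSpace X]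
    (s : ℝ) (K : Set X) : ℝ≥0∞ :=
  ⨅ (E : ℕ → Set X) (_ : K ⊆ ⋃ k, E k), ∑' k, EMetric.diam (E k) ^ s

lemma slab_vol {N : ℕ} (c : Fin N → ℝ) (r : ℝ) (B : Finset (Fin N)) :
    MeasureTheory.volume (Set.univ.pi (fun i =>
      if i ∈ B then Set.Icc (c i - r) (c i + r) else Set.Icc (0:ℝ) 1)) =
      ENNReal.ofReal (2 * r) ^ B.card := by
  rw [volume_pi_pi]
  have : ∀ i : Fin N,
      MeasureTheory.volume (if i ∈ B then Set.Icc (c i - r) (c i + r) else Set.Icc (0:ℝ) 1)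
        = if i ∈ B then ENNReal.ofReal (2 * r) else 1 := by
    intro i
    split
    · rw [Real.volume_Icc]; ring_nf
    · simp [Real.volume_Icc]
  simp only [this]
  rw [Finset.prod_ite_mem, Finset.univ_inter, Finset.prod_const]

lemma key_bound {N n : ℕ} (hn : 1 ≤ n) (A : Finset (Fin N)) (hA : n ≤ A.card)
    (T : Set (Fin N → ℝ)) :
    MeasureTheory.volume {y ∈ Set.Icc (0 : Fin N → ℝ) 1 | ∃ x ∈ T, ∀ i ∈ A, y i = x i} ≤
      (2 * EMetric.diam T) ^ n := by
  rcases T.eq_empty_or_nonempty with hT | ⟨x0, hx0⟩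
  · simp [hT]
  rcases eq_or_ne (EMetric.diam T) ∞ with hd | hd
  · rw [hd, ENNReal.mul_top (by norm_num), ENNReal.top_pow (by omega : n ≠ 0)]
    exact le_top
  set r := (EMetric.diam T).toReal with hr
  obtain ⟨B, hBA, hBcard⟩ := A.exists_subset_card_eq hA
  have hsub : {y ∈ Set.Icc (0 : Fin N → ℝ) 1 | ∃ x ∈ T, ∀ i ∈ A, y i = x i} ⊆
      Set.univ.pi (fun i => if i ∈ B then Set.Icc (x0 i - r) (x0 i + r) else Set.Icc (0:ℝ) 1) := by
    rintro y ⟨hy01, x, hxT, hagree⟩ i _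
    by_cases hiB : i ∈ B
    · simp only [hiB, if_true]
      have hyi : y i = x i := hagree i (hBA hiB)
      have hdist : dist (x i) (x0 i) ≤ r := by
        have h1 : edist (x i) (x0 i) ≤ EMetric.diam T :=
          le_trans (edist_le_pi_edist x x0 i) (EMetric.edist_le_diam_of_mem hxT hx0)
        have := ENNReal.toReal_mono hd h1
        rwa [← dist_edist] at this
      rw [Real.dist_eq] at hdist
      have := abs_le.mp hdist
      constructor <;> [linarith [this.1, hyi ▸ this.1]; skip]
      rw [hyi]; linarith [this.2]
    · simp only [hiB, if_false]
      exact ⟨hy01.1 i, hy01.2 i⟩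
  calc MeasureTheory.volume {y ∈ Set.Icc (0 : Fin N → ℝ) 1 | ∃ x ∈ T, ∀ i ∈ A, y i = x i}
      ≤ ENNReal.ofReal (2 * r) ^ B.card := by
        rw [← slab_vol x0 r B]; exact measure_mono hsub
    _ = (2 * EMetric.diam T) ^ n := by
        rw [hBcard, ENNReal.ofReal_mul (by norm_num), ENNReal.ofReal_ofNat,
          hr, ENNReal.ofReal_toReal hd]

theorem statement8 {N : ℕ} (K : Set (Fin N → ℝ)) (hK : IsClosed K)
    (hK1 : K ⊆ Set.Icc 0 1) {n : ℕ} (hn : 1 ≤ n) (hnN : n ≤ N) :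
    MeasureTheory.volume
        (⋃ (A : Finset (Fin N)) (_ : n ≤ A.card),
          {y ∈ Set.Icc (0 : Fin N → ℝ) 1 | ∃ x ∈ K, ∀ i ∈ A, y i = x i}) ≤
      4 ^ N * hausdorffContentInf (n : ℝ) K := by
  classical
  have h4 : (4 : ℝ≥0∞) ^ N ≠ 0 := by positivity
  have h4' : (4 : ℝ≥0∞) ^ N ≠ ∞ := by
    exact ENNReal.pow_ne_top (by norm_num)
  rw [hausdorffContentInf, ENNReal.mul_iInf_of_ne h4 h4']
  refine le_iInf fun E => ?_
  rw [ENNReal.mul_iInf_of_ne h4 h4']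
  refine le_iInf fun hE => ?_
  -- per (A, k) covering sets
  have hsub : (⋃ (A : Finset (Fin N)) (_ : n ≤ A.card),
      {y ∈ Set.Icc (0 : Fin N → ℝ) 1 | ∃ x ∈ K, ∀ i ∈ A, y i = x i}) ⊆
      ⋃ (A : Finset (Fin N)) (_ : n ≤ A.card) (k : ℕ),
        {y ∈ Set.Icc (0 : Fin N → ℝ) 1 | ∃ x ∈ K ∩ E k, ∀ i ∈ A, y i = x i} := by
    refine Set.iUnion₂_mono fun A hA => ?_
    rintro y ⟨hy01, x, hxK, hagree⟩
    obtain ⟨k, hk⟩ := Set.mem_iUnion.mp (hE hxK)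
    exact Set.mem_iUnion.mpr ⟨k, hy01, x, ⟨hxK, hk⟩, hagree⟩
  calc MeasureTheory.volume (⋃ (A : Finset (Fin N)) (_ : n ≤ A.card),
        {y ∈ Set.Icc (0 : Fin N → ℝ) 1 | ∃ x ∈ K, ∀ i ∈ A, y i = x i})
      ≤ ∑' (A : Finset (Fin N)), MeasureTheory.volume (⋃ (_ : n ≤ A.card) (k : ℕ),
          {y ∈ Set.Icc (0 : Fin N → ℝ) 1 | ∃ x ∈ K ∩ E k, ∀ i ∈ A, y i = x i}) :=
        le_trans (measure_mono hsub) (measure_iUnion_le _)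
    _ ≤ ∑' (A : Finset (Fin N)), ∑' (k : ℕ), (2 * EMetric.diam (E k)) ^ n := by
        refine ENNReal.tsum_le_tsum fun A => ?_
        by_cases hA : n ≤ A.card
        · simp only [hA, Set.iUnion_true]
          refine le_trans (measure_iUnion_le _) (ENNReal.tsum_le_tsum fun k => ?_)
          refine le_trans (key_bound hn A hA (K ∩ E k)) ?_
          have hmono : EMetric.diam (K ∩ E k) ≤ EMetric.diam (E k) :=
            EMetric.diam_mono Set.inter_subset_right
          gcongr
        · simp [hA]
    _ = (2:ℝ≥0∞) ^ N * ((2:ℝ≥0∞) ^ n * ∑' (k : ℕ), EMetric.diam (E k) ^ n) := by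
        rw [tsum_fintype, Finset.sum_const, Finset.card_univ, Fintype.card_finset,
          Fintype.card_fin]
        simp only [mul_pow, ENNReal.tsum_mul_left, nsmul_eq_mul]
        push_cast
        ring
    _ ≤ 4 ^ N * ∑' (k : ℕ), EMetric.diam (E k) ^ (n : ℝ) := by
        have : ∀ k : ℕ, EMetric.diam (E k) ^ n = EMetric.diam (E k) ^ (n : ℝ) := fun k =>
          (ENNReal.rpow_natCast (EMetric.diam (E k)) n).symm
        simp only [this]
        rw [← mul_assoc]
        gcongr
        calc (2:ℝ≥0∞) ^ N * 2 ^ n ≤ 2 ^ N * 2 ^ N := by gcongr <;> norm_num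
          _ = 4 ^ N := by rw [← mul_pow]; norm_num
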